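/- Let n ≥ 1 be an integer and T₁, …, T_n nonnegative real numbers. Define Q := Σ_{j=1}^{n} (j/n)·T_j^{n/j}·(2(n−j))^{(n−j)/j}, with the convention 0⁰ = 1 (so the j = n summand equals T_n). Then for every real number a ≥ 0: Σ_{j=1}^{n} T_j·a^j ≤ 1/2 + Q·a^n. -/

import Mathlib

open Finset Real

private lemma young_term_bound (n j : ℕ) (hj1 : 1 ≤ j) (hjn : j ≤ n)
    (t a : ℝ) (ht : 0 ≤ t) (ha : 0 ≤ a) :
    t * a ^ j ≤ ((j : ℝ) / (n : ℝ)) * t ^ ((n : ℝ) / (j : ℝ)) *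
      (2 * ((n : ℝ) - (j : ℝ))) ^ (((n : ℝ) - (j : ℝ)) / (j : ℝ)) * a ^ n
      + 1 / (2 * n) := by
  have hjR : (0 : ℝ) < j := by exact_mod_cast hj1
  have hnR : (0 : ℝ) < n := lt_of_lt_of_le hjR (by exact_mod_cast hjn)
  rcases eq_or_lt_of_le hjn with rfl | hlt
  · -- j = n : equality up to the slack term
    have h1 : ((j : ℝ) / j) = 1 := div_self hjR.ne'
    rw [sub_self, mul_zero, zero_div, Real.rpow_zero, h1, Real.rpow_one, one_mul, mul_one]
    have : 0 ≤ 1 / (2 * (j : ℝ)) := by positivity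
    linarith
  · -- j < n : Young's inequality
    have hltR : (j : ℝ) < n := by exact_mod_cast hlt
    have hdpos : (0 : ℝ) < (n : ℝ) - j := by linarith
    set c : ℝ := 2 * ((n : ℝ) - j) with hc
    have hcpos : 0 < c := by positivity
    set l : ℝ := c ^ (((n : ℝ) - j) / n) with hl
    have hlpos : 0 < l := Real.rpow_pos_of_pos hcpos _
    have hpq : ((n : ℝ) / j).HolderConjugate ((n : ℝ) / ((n : ℝ) - j)) := by
      constructor
      · rw [inv_div, inv_div, inv_one, ← add_div, add_sub_cancel, div_self hnR.ne']
      · positivity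
      · positivity
    have hx : 0 ≤ t * a ^ j * l := by positivity
    have hY := Real.young_inequality_of_nonneg hx (le_of_lt (inv_pos.mpr hlpos)) hpq
    have hxy : t * a ^ j * l * l⁻¹ = t * a ^ j := by
      field_simp
    rw [hxy] at hY
    have hxp : (t * a ^ j * l) ^ ((n : ℝ) / j)
        = t ^ ((n : ℝ) / j) * a ^ n * c ^ (((n : ℝ) - j) / j) := by
      rw [Real.mul_rpow (by positivity) hlpos.le, Real.mul_rpow ht (by positivity)]
      congr 1
      · congr 1
        rw [← Real.rpow_natCast a j, ← Real.rpow_mul ha, mul_div_cancel₀ _ hjR.ne',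
          Real.rpow_natCast]
      · rw [hl, ← Real.rpow_mul hcpos.le]
        congr 1
        field_simp
    have hyq : (l⁻¹) ^ ((n : ℝ) / ((n : ℝ) - j)) = c⁻¹ := by
      rw [hl, ← Real.rpow_neg hcpos.le, ← Real.rpow_mul hcpos.le, ← Real.rpow_neg_one c]
      congr 1
      field_simp
    rw [hxp, hyq] at hY
    calc t * a ^ j ≤ t ^ ((n : ℝ) / j) * a ^ n * c ^ (((n : ℝ) - j) / j) / ((n : ℝ) / j)
          + c⁻¹ / ((n : ℝ) / ((n : ℝ) - j)) := hY
      _ = (j / n) * t ^ ((n : ℝ) / j) * c ^ (((n : ℝ) - j) / j) * a ^ n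
          + 1 / (2 * n) := by
          rw [hc]; field_simp
      _ ≤ _ := le_refl _

open Finset in
/-- The Young-inequality bound from the proof of Corollary 4.8 of the paper:
`Σ_{j=1}^{n} T_j a^j ≤ 1/2 + Q a^n` with
`Q = Σ_{j=1}^{n} (j/n) T_j^{n/j} (2(n−j))^{(n−j)/j}` (convention `0⁰ = 1`). -/
theorem young_sum_bound (n : ℕ) (hn : 1 ≤ n) (T : ℕ → ℝ) (hT : ∀ j, 0 ≤ T j)
    (Q : ℝ)
    (hQ : Q = ∑ j ∈ Finset.Icc 1 n, ((j : ℝ) / (n : ℝ)) *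
      (T j) ^ ((n : ℝ) / (j : ℝ)) *
      (2 * ((n : ℝ) - (j : ℝ))) ^ (((n : ℝ) - (j : ℝ)) / (j : ℝ))) :
    ∀ a : ℝ, 0 ≤ a →
      (∑ j ∈ Finset.Icc 1 n, T j * a ^ j) ≤ 1 / 2 + Q * a ^ n := by
  intro a ha
  have hcard : (Finset.Icc 1 n).card = n := by
    rw [Nat.card_Icc]; omega
  calc ∑ j ∈ Finset.Icc 1 n, T j * a ^ j
      ≤ ∑ j ∈ Finset.Icc 1 n, (((j : ℝ) / (n : ℝ)) * (T j) ^ ((n : ℝ) / (j : ℝ)) *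
          (2 * ((n : ℝ) - (j : ℝ))) ^ (((n : ℝ) - (j : ℝ)) / (j : ℝ)) * a ^ n
          + 1 / (2 * n)) := by
        apply Finset.sum_le_sum
        intro j hj
        rw [Finset.mem_Icc] at hj
        exact young_term_bound n j hj.1 hj.2 (T j) a (hT j) ha
    _ = 1 / 2 + Q * a ^ n := by
        rw [Finset.sum_add_distrib, Finset.sum_const, hcard, ← Finset.sum_mul, ← hQ]
        have hnR : (0 : ℝ) < n := by exact_mod_cast hn
        field_simp
        have h2 : (n : ℝ) * (1 / (2 * n)) = 2⁻¹ := by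
          rw [mul_one_div, div_mul_cancel_right₀ hnR.ne']
        rw [nsmul_eq_mul, h2]
        ring
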